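/- Under the same GMM setup with λ ∈ (0,1/2), if R_min ≥ √(c(λ)^{-1} log(15(K−1)(1+θ))), then for every i ∈ [K] and every μ ∈ U_λ, E_X[w_i(X,μ)] ≥ (3/4)π_i, where the expectation is over X drawn from the full mixture. -/

import Mathlib

open MeasureTheory Real

/-- Density of the `N(m, I_d)` Gaussian on `ℝ^d`. -/
noncomputable def gaussDensity {d : ℕ} (m x : EuclideanSpace ℝ (Fin d)) : ℝ :=
  (2 * Real.pi) ^ (-(d : ℝ) / 2) * Real.exp (-‖x - m‖ ^ 2 / 2)

/-- EM posterior membership weight of component `j` given candidate centers `μ`. -/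
noncomputable def wEM {d K : ℕ} (p : Fin K → ℝ) (μ : Fin K → EuclideanSpace ℝ (Fin d))
    (j : Fin K) (x : EuclideanSpace ℝ (Fin d)) : ℝ :=
  p j * Real.exp (-‖x - μ j‖ ^ 2 / 2) / ∑ k, p k * Real.exp (-‖x - μ k‖ ^ 2 / 2)

/-- `R_k = min_{j ≠ k} ‖μ_j* - μ_k*‖`. -/
noncomputable def Rsep {d K : ℕ} (μs : Fin K → EuclideanSpace ℝ (Fin d)) (k : Fin K) : ℝ :=
  sInf {r | ∃ j, j ≠ k ∧ r = ‖μs j - μs k‖}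

/-- `R_min = min_{i ≠ j} ‖μ_i* - μ_j*‖`. -/
noncomputable def Rmin {d K : ℕ} (μs : Fin K → EuclideanSpace ℝ (Fin d)) : ℝ :=
  sInf {r | ∃ i j, i ≠ j ∧ r = ‖μs i - μs j‖}

/-- `θ = π_max / π_min`. -/
noncomputable def thetaRatio {K : ℕ} (p : Fin K → ℝ) : ℝ :=
  sSup (Set.range p) / sInf (Set.range p)

/-- The exponent constant `c(λ)`. -/
noncomputable def clam (lam : ℝ) : ℝ := (1 / 8) * ((1 - 2 * lam) / (1 + 2 * lam)) ^ 2

lemma gauss_base_integrable {d : ℕ} :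
    Integrable (fun x : EuclideanSpace ℝ (Fin d) => rexp (-‖x‖ ^ 2 / 2)) := by
  have h := (GaussianFourier.integrable_cexp_neg_mul_sq_norm_add (V := EuclideanSpace ℝ (Fin d))
      (b := (1/2 : ℂ)) (by norm_num) 0 0).norm
  convert h using 2 with x
  simp [Complex.norm_exp]
  norm_num
  have : ((‖x‖:ℂ)^2).re = ‖x‖^2 := by
    rw [show ((‖x‖:ℂ)^2) = ((‖x‖^2 : ℝ) : ℂ) by push_cast; ring, Complex.ofReal_re]
  rw [this]; ring

lemma gauss_shift_integrable {d : ℕ} (c : EuclideanSpace ℝ (Fin d)) :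
    Integrable (fun x : EuclideanSpace ℝ (Fin d) => rexp (-‖x - c‖ ^ 2 / 2)) :=
  gauss_base_integrable.comp_sub_right c

lemma gauss_shift_integral {d : ℕ} (c : EuclideanSpace ℝ (Fin d)) :
    ∫ x : EuclideanSpace ℝ (Fin d), rexp (-‖x - c‖ ^ 2 / 2) = (2 * π) ^ ((d : ℝ) / 2) := by
  rw [integral_sub_right_eq_self (fun x : EuclideanSpace ℝ (Fin d) => rexp (-‖x‖ ^ 2 / 2)) c]
  have h := GaussianFourier.integral_rexp_neg_mul_sq_norm (V := EuclideanSpace ℝ (Fin d))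
      (b := (1/2 : ℝ)) (by norm_num)
  rw [finrank_euclideanSpace_fin] at h
  simp_rw [show ∀ v : EuclideanSpace ℝ (Fin d), -‖v‖^2/2 = -(1/2)*‖v‖^2 by intro v; ring, h]
  rw [show (π/(1/2:ℝ)) = 2*π by ring]

lemma complete_square {E : Type*} [NormedAddCommGroup E] [InnerProductSpace ℝ E]
    (x m a b : E) (t : ℝ) :
    t * ((‖x - a‖ ^ 2 - ‖x - b‖ ^ 2) / 2) - ‖x - m‖ ^ 2 / 2
      = -‖x - (m + t • (b - a))‖ ^ 2 / 2
        + (t * ((‖m - a‖ ^ 2 - ‖m - b‖ ^ 2) / 2) + t ^ 2 * ‖b - a‖ ^ 2 / 2) := by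
  simp only [← real_inner_self_eq_norm_sq, inner_sub_left, inner_sub_right, inner_add_left,
    inner_add_right, real_inner_smul_left, real_inner_smul_right,
    real_inner_comm m x, real_inner_comm a x, real_inner_comm b x,
    real_inner_comm a m, real_inner_comm b m, real_inner_comm b a]
  ring

lemma gaussDensity_nonneg {d : ℕ} (m x : EuclideanSpace ℝ (Fin d)) : 0 ≤ gaussDensity m x := by
  unfold gaussDensity; positivity

lemma gaussDensity_integrable {d : ℕ} (m : EuclideanSpace ℝ (Fin d)) :
    Integrable (fun x => gaussDensity m x) := by
  unfold gaussDensity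
  exact (gauss_shift_integrable m).const_mul _

lemma twopi_rpow_cancel {d : ℕ} :
    (2 * π) ^ (-(d : ℝ) / 2) * (2 * π) ^ ((d : ℝ) / 2) = 1 := by
  rw [← Real.rpow_add (by positivity), show (-(d:ℝ)/2 + (d:ℝ)/2) = 0 by ring, Real.rpow_zero]

lemma gaussDensity_integral {d : ℕ} (m : EuclideanSpace ℝ (Fin d)) :
    ∫ x, gaussDensity m x = 1 := by
  unfold gaussDensity
  rw [integral_const_mul, gauss_shift_integral]
  exact twopi_rpow_cancel

lemma gaussDensity_continuous {d : ℕ} (m : EuclideanSpace ℝ (Fin d)) :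
    Continuous (fun x => gaussDensity m x) := by
  unfold gaussDensity
  fun_prop

set_option maxHeartbeats 1000000 in
theorem stmt8 {d K : ℕ} (μs : Fin K → EuclideanSpace ℝ (Fin d)) (p : Fin K → ℝ)
    (lam : ℝ) (hl1 : 0 < lam) (hl2 : lam < 1 / 2)
    (hp : ∀ k, 0 < p k) (hps : ∑ k, p k = 1)
    (hsep : Rmin μs ≥
      Real.sqrt ((clam lam)⁻¹ * Real.log (15 * ((K : ℝ) - 1) * (1 + thetaRatio p)))) :
    ∀ i, ∀ μ : Fin K → EuclideanSpace ℝ (Fin d),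
      (∀ k, ‖μ k - μs k‖ ≤ lam * Rsep μs k) →
      (∫ x, wEM p μ i x * ∑ j, p j * gaussDensity (μs j) x) ≥ (3 / 4) * p i := by
  intro i μ hμ
  -- basic facts
  have hden : ∀ x, 0 < ∑ k, p k * rexp (-‖x - μ k‖ ^ 2 / 2) := fun x =>
    Finset.sum_pos (fun k _ => mul_pos (hp k) (Real.exp_pos _)) ⟨i, Finset.mem_univ i⟩
  have hterm_le : ∀ (j : Fin K) x,
      p j * rexp (-‖x - μ j‖ ^ 2 / 2) ≤ ∑ k, p k * rexp (-‖x - μ k‖ ^ 2 / 2) := by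
    intro j x
    exact Finset.single_le_sum (f := fun k => p k * rexp (-‖x - μ k‖ ^ 2 / 2))
      (fun k _ => le_of_lt (mul_pos (hp k) (Real.exp_pos _))) (Finset.mem_univ j)
  have hw_nonneg : ∀ (j : Fin K) x, 0 ≤ wEM p μ j x := fun j x =>
    div_nonneg (le_of_lt (mul_pos (hp j) (Real.exp_pos _))) (le_of_lt (hden x))
  have hw_le_one : ∀ (j : Fin K) x, wEM p μ j x ≤ 1 := fun j x =>
    (div_le_one (hden x)).2 (hterm_le j x)
  have hw_cont : ∀ (j : Fin K), Continuous (wEM p μ j) := by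
    intro j
    unfold wEM
    apply Continuous.div
    · fun_prop
    · fun_prop
    · exact fun x => ne_of_gt (hden x)
  have hwg_int : ∀ (j : Fin K) (m : EuclideanSpace ℝ (Fin d)),
      Integrable (fun x => wEM p μ j x * gaussDensity m x) := by
    intro j m
    apply (gaussDensity_integrable m).mono'
      (((hw_cont j).mul (gaussDensity_continuous m)).aestronglyMeasurable)
    filter_upwards with x
    change ‖wEM p μ j x * gaussDensity m x‖ ≤ gaussDensity m x
    rw [Real.norm_eq_abs, abs_of_nonneg (mul_nonneg (hw_nonneg j x) (gaussDensity_nonneg m x))]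
    calc wEM p μ j x * gaussDensity m x ≤ 1 * gaussDensity m x :=
          mul_le_mul_of_nonneg_right (hw_le_one j x) (gaussDensity_nonneg m x)
      _ = gaussDensity m x := one_mul _
  -- theta facts
  have hrange_ne : (Set.range p).Nonempty := ⟨p i, i, rfl⟩
  have hrange_fin : (Set.range p).Finite := Set.finite_range p
  have hInf_mem := hrange_ne.csInf_mem hrange_fin
  have hSup_mem := hrange_ne.csSup_mem hrange_fin
  have hInf_pos : 0 < sInf (Set.range p) := by
    obtain ⟨k, hk⟩ := hInf_mem
    rw [← hk]; exact hp k
  have hInf_le : ∀ k, sInf (Set.range p) ≤ p k := fun k =>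
    csInf_le hrange_fin.bddBelow ⟨k, rfl⟩
  have hle_Sup : ∀ k, p k ≤ sSup (Set.range p) := fun k =>
    le_csSup hrange_fin.bddAbove ⟨k, rfl⟩
  have htheta1 : 1 ≤ thetaRatio p := by
    rw [thetaRatio, le_div_iff₀ hInf_pos, one_mul]
    exact (hInf_le i).trans (hle_Sup i)
  have htheta_bd : ∀ j : Fin K, p j / p i ≤ thetaRatio p := fun j =>
    div_le_div₀ (le_trans (le_of_lt hInf_pos) ((hInf_le i).trans (hle_Sup i)))
      (hle_Sup j) hInf_pos (hInf_le i)
  -- the key per-component bound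
  have key : ∀ j : Fin K, j ≠ i →
      ∫ x, wEM p μ j x * gaussDensity (μs i) x ≤ 1 / (15 * ((K : ℝ) - 1)) := by
    intro j hj
    have hq : (0:ℝ) < 1 + 2*lam := by linarith
    have hs : (0:ℝ) < 1 - 2*lam := by linarith
    set D := ‖μs j - μs i‖ with hDdef
    set t : ℝ := (1 - 2*lam) / (2*(1+2*lam)^2) with htdef
    have ht0 : 0 < t := by positivity
    have ht1 : t ≤ 1 := by
      rw [htdef, div_le_one (by positivity)]
      nlinarith
    -- geometry
    have hD0 : 0 ≤ D := norm_nonneg _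
    have hRsepi : Rsep μs i ≤ D :=
      csInf_le ⟨0, by rintro r ⟨j', _, rfl⟩; exact norm_nonneg _⟩ ⟨j, hj, rfl⟩
    have hRsepj : Rsep μs j ≤ D := by
      have h := csInf_le (s := {r | ∃ j', j' ≠ j ∧ r = ‖μs j' - μs j‖})
        ⟨0, by rintro r ⟨j', _, rfl⟩; exact norm_nonneg _⟩ ⟨i, Ne.symm hj, rfl⟩
      rwa [norm_sub_rev] at h
    have hRminD : Rmin μs ≤ D :=
      csInf_le ⟨0, by rintro r ⟨i', j', _, rfl⟩; exact norm_nonneg _⟩ ⟨j, i, hj, rfl⟩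
    have hRmin0 : 0 ≤ Rmin μs := le_trans (Real.sqrt_nonneg _) hsep
    have hma : ‖μs i - μ i‖ ≤ lam * D := by
      rw [norm_sub_rev]
      exact le_trans (hμ i) (by nlinarith)
    have hbj : ‖μ j - μs j‖ ≤ lam * D := le_trans (hμ j) (by nlinarith)
    have hmb : (1 - lam) * D ≤ ‖μs i - μ j‖ := by
      have h1 : ‖μs i - μs j‖ ≤ ‖μs i - μ j‖ + ‖μ j - μs j‖ := by
        have h := norm_add_le (μs i - μ j) (μ j - μs j)
        rw [sub_add_sub_cancel] at h
        exact h
      have h3 : ‖μs i - μs j‖ = D := by rw [hDdef, norm_sub_rev]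
      linarith
    have hba : ‖μ j - μ i‖ ≤ (1 + 2*lam) * D := by
      have h1 : ‖μ j - μ i‖ ≤ ‖μ j - μs j‖ + (‖μs j - μs i‖ + ‖μs i - μ i‖) := by
        calc ‖μ j - μ i‖ = ‖(μ j - μs j) + ((μs j - μs i) + (μs i - μ i))‖ := by
              congr 1; abel
          _ ≤ ‖μ j - μs j‖ + ‖(μs j - μs i) + (μs i - μ i)‖ := norm_add_le _ _
          _ ≤ ‖μ j - μs j‖ + (‖μs j - μs i‖ + ‖μs i - μ i‖) := by
              linarith [norm_add_le (μs j - μs i) (μs i - μ i)]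
      linarith
    -- exponent constant bound
    set A := t * ((‖μs i - μ i‖^2 - ‖μs i - μ j‖^2)/2) + t^2 * ‖μ j - μ i‖^2/2 with hAdef
    have hA_le : A ≤ -(clam lam) * D^2 := by
      have h1 : ‖μs i - μ i‖^2 ≤ lam^2 * D^2 := by nlinarith [norm_nonneg (μs i - μ i)]
      have h2 : (1-lam)^2 * D^2 ≤ ‖μs i - μ j‖^2 := by
        nlinarith [norm_nonneg (μs i - μ j), (show (0:ℝ) ≤ (1-lam)*D by nlinarith)]
      have h3 : ‖μ j - μ i‖^2 ≤ (1+2*lam)^2 * D^2 := by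
        nlinarith [norm_nonneg (μ j - μ i), (show (0:ℝ) ≤ (1+2*lam)*D by positivity)]
      have hX : (‖μs i - μ i‖^2 - ‖μs i - μ j‖^2)/2 ≤ -((1-2*lam) * D^2)/2 := by nlinarith
      calc A ≤ t * (-((1-2*lam) * D^2)/2) + t^2 * ((1+2*lam)^2*D^2)/2 := by
            rw [hAdef]
            have e1 := mul_le_mul_of_nonneg_left hX (le_of_lt ht0)
            have e2 := mul_le_mul_of_nonneg_left h3 (le_of_lt (by positivity : (0:ℝ) < t^2))
            linarith
        _ = -(clam lam) * D^2 := by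
            rw [htdef, clam]
            field_simp
            ring
    -- arithmetic consequences of separation
    have hK2 : (2:ℝ) ≤ (K:ℝ) := by
      have h := Fintype.one_lt_card_iff_nontrivial.2 ⟨j, i, hj⟩
      rw [Fintype.card_fin] at h
      exact_mod_cast h
    set M := 15 * ((K:ℝ)-1) * (1 + thetaRatio p) with hMdef
    have hM2 : (2:ℝ) ≤ M := by rw [hMdef]; nlinarith
    have hM0 : (0:ℝ) < M := by linarith
    have hclam0 : 0 < clam lam := by
      rw [clam]; positivity
    have hRminsq : (clam lam)⁻¹ * log M ≤ (Rmin μs)^2 := by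
      have h1 : Real.sqrt ((clam lam)⁻¹ * log M) ^ 2 ≤ (Rmin μs)^2 :=
        pow_le_pow_left₀ (Real.sqrt_nonneg _) hsep 2
      have hlog0 : 0 ≤ log M := Real.log_nonneg (by linarith)
      rwa [Real.sq_sqrt (mul_nonneg (inv_nonneg.2 (le_of_lt hclam0)) hlog0)] at h1
    have hlogD : log M ≤ clam lam * D^2 := by
      have hD2 : (Rmin μs)^2 ≤ D^2 := pow_le_pow_left₀ hRmin0 hRminD 2
      have h4 := mul_le_mul_of_nonneg_left hRminsq (le_of_lt hclam0)
      rw [← mul_assoc, mul_inv_cancel₀ (ne_of_gt hclam0), one_mul] at h4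
      nlinarith
    have hexp_le : rexp (-(clam lam) * D^2) ≤ 1/M := by
      rw [show (1:ℝ)/M = rexp (-(log M)) by rw [Real.exp_neg, Real.exp_log hM0, one_div]]
      exact Real.exp_le_exp.2 (by linarith)
    -- pointwise bound
    set v := μs i + t • (μ j - μ i) with hvdef
    set C := (p j / p i)^t * rexp A * (2*π)^(-(d:ℝ)/2) with hCdef
    have hpij0 : 0 < p j / p i := div_pos (hp j) (hp i)
    have hpt : ∀ x, wEM p μ j x * gaussDensity (μs i) x ≤ C * rexp (-‖x - v‖^2/2) := by
      intro x
      set r := (p j * rexp (-‖x - μ j‖^2/2)) / (p i * rexp (-‖x - μ i‖^2/2)) with hrdef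
      have hr0 : 0 < r := by
        rw [hrdef]
        exact div_pos (mul_pos (hp j) (Real.exp_pos _)) (mul_pos (hp i) (Real.exp_pos _))
      have hw_le_r : wEM p μ j x ≤ r := by
        have hrw : wEM p μ j x
            = p j * rexp (-‖x - μ j‖^2/2) / ∑ k, p k * rexp (-‖x - μ k‖^2/2) := rfl
        rw [hrw, hrdef]
        exact div_le_div_of_nonneg_left (le_of_lt (mul_pos (hp j) (Real.exp_pos _)))
          (mul_pos (hp i) (Real.exp_pos _)) (hterm_le i x)
      have hwr : wEM p μ j x ≤ r ^ t := by
        rcases le_total r 1 with h | h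
        · refine le_trans hw_le_r ?_
          calc r = r ^ (1:ℝ) := (Real.rpow_one r).symm
            _ ≤ r ^ t := Real.rpow_le_rpow_of_exponent_ge hr0 h ht1
        · exact le_trans (hw_le_one j x) (Real.one_le_rpow h (le_of_lt ht0))
      have hrpow : r ^ t
          = (p j / p i)^t * rexp (t * ((‖x - μ i‖^2 - ‖x - μ j‖^2)/2)) := by
        have hre : r = (p j / p i) * rexp ((‖x - μ i‖^2 - ‖x - μ j‖^2)/2) := by
          rw [hrdef, mul_div_mul_comm, ← Real.exp_sub]
          congr 2
          ring
        rw [hre, Real.mul_rpow (le_of_lt hpij0) (le_of_lt (Real.exp_pos _)),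
          ← Real.exp_mul]
        congr 2
        ring
      have hcs := complete_square x (μs i) (μ i) (μ j) t
      calc wEM p μ j x * gaussDensity (μs i) x
          ≤ r^t * gaussDensity (μs i) x :=
            mul_le_mul_of_nonneg_right hwr (gaussDensity_nonneg _ _)
        _ = (p j / p i)^t * (2*π)^(-(d:ℝ)/2)
              * rexp (t * ((‖x - μ i‖^2 - ‖x - μ j‖^2)/2) + -‖x - μs i‖^2/2) := by
            rw [hrpow, gaussDensity, Real.exp_add]
            ring
        _ = (p j / p i)^t * (2*π)^(-(d:ℝ)/2) * rexp (-‖x - v‖^2/2 + A) := by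
            congr 1
            congr 1
            rw [hvdef, hAdef]
            linarith [hcs]
        _ = C * rexp (-‖x - v‖^2/2) := by
            rw [Real.exp_add, hCdef]
            ring
    have hC0 : 0 ≤ C := by
      rw [hCdef]
      exact mul_nonneg (mul_nonneg (Real.rpow_nonneg (le_of_lt hpij0) t)
        (le_of_lt (Real.exp_pos _))) (Real.rpow_nonneg (by positivity) _)
    have hint : ∫ x, wEM p μ j x * gaussDensity (μs i) x ≤ ∫ x, C * rexp (-‖x - v‖^2/2) :=
      integral_mono (hwg_int j (μs i)) ((gauss_shift_integrable v).const_mul C) hpt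
    rw [integral_const_mul, gauss_shift_integral] at hint
    have hCeq : C * (2*π)^((d:ℝ)/2) = (p j / p i)^t * rexp A := by
      calc C * (2*π)^((d:ℝ)/2)
          = (p j / p i)^t * rexp A * ((2*π)^(-(d:ℝ)/2) * (2*π)^((d:ℝ)/2)) := by
            rw [hCdef]; ring
        _ = (p j / p i)^t * rexp A := by rw [twopi_rpow_cancel, mul_one]
    have hpow_le : (p j / p i)^t ≤ 1 + thetaRatio p := by
      rcases le_total (p j / p i) 1 with h | h
      · exact le_trans (Real.rpow_le_one (le_of_lt hpij0) h (le_of_lt ht0)) (by linarith)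
      · calc (p j/p i)^t ≤ (p j/p i)^(1:ℝ) := Real.rpow_le_rpow_of_exponent_le h ht1
          _ = p j / p i := Real.rpow_one _
          _ ≤ thetaRatio p := htheta_bd j
          _ ≤ 1 + thetaRatio p := by linarith
    have hexpA : rexp A ≤ 1/M := le_trans (Real.exp_le_exp.2 hA_le) hexp_le
    calc ∫ x, wEM p μ j x * gaussDensity (μs i) x
        ≤ (p j/p i)^t * rexp A := by rw [← hCeq]; exact hint
      _ ≤ (1 + thetaRatio p) * (1/M) :=
          mul_le_mul hpow_le hexpA (le_of_lt (Real.exp_pos _))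
            (by linarith)
      _ = 1 / (15*((K:ℝ)-1)) := by
          rw [hMdef]
          have h1 : (1:ℝ) + thetaRatio p ≠ 0 := by linarith
          have h2 : (K:ℝ) - 1 ≠ 0 := by intro h; rw [sub_eq_zero] at h; linarith [hK2, h.symm]
          field_simp
  -- the i-th component integral bound
  have hKcard : (Finset.univ.erase i).card = K - 1 := by
    rw [Finset.card_erase_of_mem (Finset.mem_univ i), Finset.card_univ, Fintype.card_fin]
  have hmain : (3:ℝ)/4 ≤ ∫ x, wEM p μ i x * gaussDensity (μs i) x := by
    have hdecomp : (fun x => wEM p μ i x * gaussDensity (μs i) x)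
        = fun x => gaussDensity (μs i) x
            - ∑ j ∈ Finset.univ.erase i, wEM p μ j x * gaussDensity (μs i) x := by
      funext x
      have hsum1 : ∑ j, wEM p μ j x = 1 := by
        unfold wEM
        rw [← Finset.sum_div, div_eq_one_iff_eq (ne_of_gt (hden x))]
      have h2 : wEM p μ i x + ∑ j ∈ Finset.univ.erase i, wEM p μ j x = 1 := by
        rw [Finset.add_sum_erase _ (fun j => wEM p μ j x) (Finset.mem_univ i)]; exact hsum1
      rw [← Finset.sum_mul]
      nlinarith [gaussDensity_nonneg (μs i) x]
    rw [hdecomp, integral_sub (gaussDensity_integrable (μs i))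
      (integrable_finset_sum _ (fun j _ => hwg_int j (μs i))),
      integral_finset_sum _ (fun j _ => hwg_int j (μs i)), gaussDensity_integral]
    have hsum_le : ∑ j ∈ Finset.univ.erase i, ∫ x, wEM p μ j x * gaussDensity (μs i) x
        ≤ ((K:ℝ) - 1) * (1 / (15 * ((K : ℝ) - 1))) := by
      calc ∑ j ∈ Finset.univ.erase i, ∫ x, wEM p μ j x * gaussDensity (μs i) x
          ≤ ∑ j ∈ Finset.univ.erase i, 1 / (15 * ((K : ℝ) - 1)) :=
            Finset.sum_le_sum (fun j hjm => key j (Finset.ne_of_mem_erase hjm))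
        _ = ((Finset.univ.erase i).card : ℝ) * (1 / (15 * ((K : ℝ) - 1))) := by
            rw [Finset.sum_const, nsmul_eq_mul]
        _ = ((K:ℝ) - 1) * (1 / (15 * ((K : ℝ) - 1))) := by
            rw [hKcard]
            have : (1:ℕ) ≤ K := Nat.one_le_iff_ne_zero.2 (by
              rintro rfl; exact absurd i.isLt (by omega))
            push_cast [Nat.cast_sub this]
            ring
    have hfrac : ((K:ℝ) - 1) * (1 / (15 * ((K : ℝ) - 1))) ≤ 1/4 := by
      rcases eq_or_ne ((K:ℝ) - 1) 0 with h0 | h0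
      · rw [h0]; norm_num
      · have hK1 : (1:ℝ) ≤ (K:ℝ) := by
          have : (1:ℕ) ≤ K := Nat.one_le_iff_ne_zero.2 (by
            rintro rfl; exact absurd i.isLt (by omega))
          exact_mod_cast this
        rw [mul_one_div, div_mul_eq_div_div_swap, div_self h0]
        norm_num
    linarith
  -- conclude
  have hpt_final : ∀ x, p i * (wEM p μ i x * gaussDensity (μs i) x)
      ≤ wEM p μ i x * ∑ j, p j * gaussDensity (μs j) x := by
    intro x
    have h1 : p i * gaussDensity (μs i) x ≤ ∑ j, p j * gaussDensity (μs j) x :=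
      Finset.single_le_sum (f := fun j => p j * gaussDensity (μs j) x)
        (fun j _ => mul_nonneg (le_of_lt (hp j)) (gaussDensity_nonneg _ x)) (Finset.mem_univ i)
    calc p i * (wEM p μ i x * gaussDensity (μs i) x)
        = wEM p μ i x * (p i * gaussDensity (μs i) x) := by ring
      _ ≤ wEM p μ i x * ∑ j, p j * gaussDensity (μs j) x :=
          mul_le_mul_of_nonneg_left h1 (hw_nonneg i x)
  have hmix_int : Integrable (fun x => wEM p μ i x * ∑ j, p j * gaussDensity (μs j) x) := by
    have : (fun x => wEM p μ i x * ∑ j, p j * gaussDensity (μs j) x)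
        = fun x => ∑ j, p j * (wEM p μ i x * gaussDensity (μs j) x) := by
      funext x
      rw [Finset.mul_sum]
      congr 1 with j
      ring
    rw [this]
    exact integrable_finset_sum _ (fun j _ => (hwg_int i (μs j)).const_mul (p j))
  have hstep : p i * ∫ x, wEM p μ i x * gaussDensity (μs i) x
      ≤ ∫ x, wEM p μ i x * ∑ j, p j * gaussDensity (μs j) x := by
    rw [← integral_const_mul]
    exact integral_mono ((hwg_int i (μs i)).const_mul (p i)) hmix_int hpt_final
  have := mul_le_mul_of_nonneg_left hmain (le_of_lt (hp i))
  calc (∫ x, wEM p μ i x * ∑ j, p j * gaussDensity (μs j) x)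
      ≥ p i * ∫ x, wEM p μ i x * gaussDensity (μs i) x := hstep
    _ ≥ p i * (3/4) := this
    _ = 3/4 * p i := by ring
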